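/- arXiv:2211.08756 — 4 statements merged into one kernel-verified Lean document; each statement's English description precedes it below -/
import Mathlib

section
/- For any cube Q in ℝⁿ and any x ∈ Q, the sharp maximal function of the characteristic function of Q satisfies M^♯(χ_Q)(x) = 1/2. -/
open MeasureTheory Set

noncomputable section

/-- Axis-parallel cube in `ℝⁿ` with lower corner `a` and side length `h`. -/
def cube {n : ℕ} (a : Fin n → ℝ) (h : ℝ) : Set (Fin n → ℝ) :=
  Set.Icc a (fun i => a i + h)

/-- Lebesgue measure of the cube, as a real number. -/
def vol {n : ℕ} (a : Fin n → ℝ) (h : ℝ) : ℝ :=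
  (volume (cube a h)).toReal

/-- Mean value `b_Q` of `b` over the cube. -/
def avg {n : ℕ} (b : (Fin n → ℝ) → ℝ) (a : Fin n → ℝ) (h : ℝ) : ℝ :=
  (vol a h)⁻¹ * ∫ y in cube a h, b y

/-- Values over which the sharp maximal function takes its supremum. -/
def sharpSet {n : ℕ} (f : (Fin n → ℝ) → ℝ) (x : Fin n → ℝ) : Set ℝ :=
  {r | ∃ a c, 0 < c ∧ x ∈ cube a c ∧
    r = (vol a c)⁻¹ * ∫ y in cube a c, |f y - avg f a c|}

/-- Sharp maximal function `M^♯ f`. -/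
def sharpMax {n : ℕ} (f : (Fin n → ℝ) → ℝ) (x : Fin n → ℝ) : ℝ :=
  sSup (sharpSet f x)

/-- Values over which the (variable) fractional maximal function takes its supremum. -/
def fracSet {n : ℕ} (γ : ℝ) (f : (Fin n → ℝ) → ℝ) (x : Fin n → ℝ) : Set ℝ :=
  {r | ∃ a c, 0 < c ∧ x ∈ cube a c ∧
    r = (vol a c) ^ (γ / (n : ℝ) - 1) * ∫ y in cube a c, |f y|}

/-- Fractional maximal function `M_γ f` (with `γ` a real number; applying it with
`γ = δ x` gives the variable fractional maximal operator `M_{δ(x)}`). -/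
def fracMax {n : ℕ} (γ : ℝ) (f : (Fin n → ℝ) → ℝ) (x : Fin n → ℝ) : ℝ :=
  sSup (fracSet γ f x)

/-- Values over which the fractional maximal commutator takes its supremum. -/
def commSet {n : ℕ} (α : ℝ) (b f : (Fin n → ℝ) → ℝ) (x : Fin n → ℝ) : Set ℝ :=
  {r | ∃ a c, 0 < c ∧ x ∈ cube a c ∧
    r = (vol a c) ^ (α / (n : ℝ) - 1) * ∫ y in cube a c, |b x - b y| * |f y|}

/-- Fractional maximal commutator `M_{α,b} f`. -/
def maxComm {n : ℕ} (α : ℝ) (b f : (Fin n → ℝ) → ℝ) (x : Fin n → ℝ) : ℝ :=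
  sSup (commSet α b f x)

/-- Values for the fractional maximal operator restricted to subcubes of a fixed cube. -/
def fracSetIn {n : ℕ} (γ : ℝ) (Qa : Fin n → ℝ) (Qh : ℝ) (f : (Fin n → ℝ) → ℝ)
    (x : Fin n → ℝ) : Set ℝ :=
  {r | ∃ a c, 0 < c ∧ x ∈ cube a c ∧ cube a c ⊆ cube Qa Qh ∧
    r = (vol a c) ^ (γ / (n : ℝ) - 1) * ∫ y in cube a c, |f y|}

/-- Fractional maximal operator `M_{γ,Q₀}` restricted to subcubes of `Q₀ = cube Qa Qh`. -/
def fracMaxIn {n : ℕ} (γ : ℝ) (Qa : Fin n → ℝ) (Qh : ℝ) (f : (Fin n → ℝ) → ℝ)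
    (x : Fin n → ℝ) : ℝ :=
  sSup (fracSetIn γ Qa Qh f x)

/-- Luxemburg norm on the variable Lebesgue space `L^{p(·)}(ℝⁿ)`. -/
def LuxNorm {n : ℕ} (p : (Fin n → ℝ) → ℝ) (f : (Fin n → ℝ) → ℝ) : ℝ :=
  sInf {lam : ℝ | 0 < lam ∧ ∫ x, (|f x| / lam) ^ p x ∂volume ≤ 1}

end


lemma volume_cube {n : ℕ} (a : Fin n → ℝ) (c : ℝ) :
    volume (cube a c) = ENNReal.ofReal c ^ n := by
  simp [cube, Real.volume_Icc_pi, Finset.prod_const]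

lemma vol_eq {n : ℕ} (a : Fin n → ℝ) {c : ℝ} (hc : 0 ≤ c) : vol a c = c ^ n := by
  simp [vol, volume_cube, ← ENNReal.ofReal_pow hc, ENNReal.toReal_ofReal (pow_nonneg hc n)]

lemma sharp_val {n : ℕ} (a : Fin n → ℝ) (h : ℝ) (a' : Fin n → ℝ) {c : ℝ} (hc : 0 < c) :
    ∃ t : ℝ, 0 ≤ t ∧ t ≤ 1 ∧
      t = (volume (cube a' c ∩ cube a h)).toReal / c ^ n ∧
      (vol a' c)⁻¹ * ∫ y in cube a' c,
        |(cube a h).indicator (fun _ => (1:ℝ)) y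
          - avg ((cube a h).indicator fun _ => (1:ℝ)) a' c| = 2 * t * (1 - t) := by
  set Q := cube a h
  set R := cube a' c
  have hv : (0:ℝ) < c ^ n := pow_pos hc n
  have hRfin : volume R < ⊤ := by
    rw [volume_cube]
    exact ENNReal.pow_lt_top ENNReal.ofReal_lt_top
  set m : ℝ := (volume (R ∩ Q)).toReal with hm
  set t : ℝ := m / c ^ n with ht
  have hm0 : 0 ≤ m := ENNReal.toReal_nonneg
  have hmv : m ≤ c ^ n := by
    rw [hm]
    have : volume (R ∩ Q) ≤ volume R := measure_mono inter_subset_left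
    calc (volume (R ∩ Q)).toReal ≤ (volume R).toReal :=
          ENNReal.toReal_mono hRfin.ne this
      _ = c ^ n := by rw [← vol_eq a' hc.le]; rfl
  have ht0 : 0 ≤ t := div_nonneg hm0 hv.le
  have ht1 : t ≤ 1 := (div_le_one hv).2 hmv
  -- integral of f over R
  have hQm : MeasurableSet Q := measurableSet_Icc
  have hInt : (∫ y in R, Q.indicator (fun _ => (1:ℝ)) y) = m := by
    rw [setIntegral_indicator hQm, setIntegral_const, smul_eq_mul, mul_one]
    rfl
  have havg : avg (Q.indicator fun _ => (1:ℝ)) a' c = t := by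
    rw [avg, hInt, vol_eq a' hc.le, ht, div_eq_inv_mul]
  have hIf : IntegrableOn (Q.indicator fun _ => (1:ℝ)) R volume := by
    exact (integrableOn_const hRfin.ne).indicator measurableSet_Icc
  refine ⟨t, ht0, ht1, rfl, ?_⟩
  have hpt : ∀ y, |Q.indicator (fun _ => (1:ℝ)) y - avg (Q.indicator fun _ => (1:ℝ)) a' c|
      = (1 - 2 * t) * Q.indicator (fun _ => (1:ℝ)) y + t := by
    intro y
    rw [havg]
    by_cases hy : y ∈ Q
    · simp only [indicator_of_mem hy]
      rw [abs_of_nonneg (by linarith)]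
      ring
    · simp only [indicator_of_notMem hy]
      rw [abs_of_nonpos (by linarith)]
      ring
  rw [show (∫ y in R, |Q.indicator (fun _ => (1:ℝ)) y
      - avg (Q.indicator fun _ => (1:ℝ)) a' c|)
      = ∫ y in R, ((1 - 2 * t) * Q.indicator (fun _ => (1:ℝ)) y + t) from by
    exact integral_congr_ae (Filter.Eventually.of_forall fun y => hpt y)]
  rw [integral_add (hIf.const_mul _) (integrableOn_const hRfin.ne),
    integral_const_mul, hInt, setIntegral_const, smul_eq_mul, vol_eq a' hc.le]
  have : volume.real R = c ^ n := by rw [← vol_eq a' hc.le]; rfl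
  rw [this, ht]
  field_simp
  ring


/-- for any cube `Q` and any `x ∈ Q`, `M^♯(χ_Q)(x) = 1/2`. -/
theorem statement2 (n : ℕ) (hn : 0 < n) (a : Fin n → ℝ) (h : ℝ) (hh : 0 < h)
    (x : Fin n → ℝ) (hx : x ∈ cube a h) :
    sharpMax ((cube a h).indicator fun _ => (1 : ℝ)) x = 1 / 2 := by
  set f := (cube a h).indicator fun _ => (1 : ℝ)
  set c : ℝ := h * 2 ^ ((n : ℝ)⁻¹) with hcdef
  have h2 : (1:ℝ) ≤ 2 ^ ((n : ℝ)⁻¹) := Real.one_le_rpow one_le_two (by positivity)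
  have hc : 0 < c := by positivity
  have hsub : cube a h ⊆ cube a c :=
    Icc_subset_Icc le_rfl (fun i => by dsimp; nlinarith)
  have hcpow : c ^ n = 2 * h ^ n := by
    rw [hcdef, mul_pow, ← Real.rpow_natCast (2 ^ ((n:ℝ)⁻¹)) n, ← Real.rpow_mul (by norm_num),
      inv_mul_cancel₀ (by exact_mod_cast hn.ne'), Real.rpow_one]
    ring
  have hmem : (1:ℝ)/2 ∈ sharpSet f x := by
    obtain ⟨t, ht0, ht1, htval, hval⟩ := sharp_val a h a hc
    refine ⟨a, c, hc, hsub hx, ?_⟩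
    have hQR : cube a c ∩ cube a h = cube a h := inter_eq_self_of_subset_right hsub
    have hvolQ : (volume (cube a h)).toReal = h ^ n := by rw [← vol_eq a hh.le]; rfl
    have : t = 1/2 := by
      rw [htval, hQR, hvolQ, hcpow]
      have : (0:ℝ) < h ^ n := pow_pos hh n
      field_simp
    rw [hval, this]; norm_num
  refine le_antisymm ?_ ?_
  · apply csSup_le ⟨1/2, hmem⟩
    rintro r ⟨a', c', hc', _, rfl⟩
    obtain ⟨t, ht0, ht1, _, hval⟩ := sharp_val a h a' hc'
    rw [hval]; nlinarith [sq_nonneg (2*t - 1)]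
  · apply le_csSup ⟨1/2, ?_⟩ hmem
    rintro r ⟨a', c', hc', _, rfl⟩
    obtain ⟨t, ht0, ht1, _, hval⟩ := sharp_val a h a' hc'
    rw [hval]; nlinarith [sq_nonneg (2*t - 1)]
end

section
/- If b belongs to the pointwise variable Lipschitz space L(δ(·)) with norm ‖b‖ and 0 ≤ α < n, then for every x ∈ ℝⁿ the fractional maximal commutator satisfies the pointwise bound M_{α,b}(f)(x) ≤ C ‖b‖ · M_{α+δ(x)}(f)(x), with C depending only on n. -/
open MeasureTheory Set

/-- pointwise bound for the fractional maximal commutator: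
`M_{α,b} f (x) ≤ C ‖b‖ M_{α+δ(x)} f (x)`, with `C` depending only on `n`. -/
theorem statement5 (n : ℕ) (hn : 0 < n) :
    ∃ C : ℝ, 0 ≤ C ∧
      ∀ (α : ℝ), 0 ≤ α →
      ∀ (δ : (Fin n → ℝ) → ℝ), (∀ x, 0 < δ x ∧ α + δ x < n) →
      ∀ (b : (Fin n → ℝ) → ℝ) (B : ℝ), 0 ≤ B →
        (∀ x y, |b x - b y| ≤ B * dist x y ^ δ x) →
      ∀ (f : (Fin n → ℝ) → ℝ), LocallyIntegrable f volume →
      ∀ x : Fin n → ℝ,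
        BddAbove (fracSet (α + δ x) f x) →
        maxComm α b f x ≤ C * B * fracMax (α + δ x) f x := by
  refine ⟨1, zero_le_one, ?_⟩
  intro α hα δ hδ b B hB hb f hf x hbdd
  obtain ⟨hδx, hαδ⟩ := hδ x
  have hxmem : x ∈ cube x 1 := by
    constructor
    · exact le_refl x
    · intro i; simp
  have hmem0 : (vol x 1) ^ ((α + δ x) / (n:ℝ) - 1) * ∫ y in cube x 1, |f y|
      ∈ fracSet (α + δ x) f x := ⟨x, 1, one_pos, hxmem, rfl⟩
  have hfracnn : 0 ≤ fracMax (α + δ x) f x := by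
    refine le_trans ?_ (le_csSup hbdd hmem0)
    have : 0 ≤ ∫ y in cube x 1, |f y| := integral_nonneg fun y => abs_nonneg _
    exact mul_nonneg (Real.rpow_nonneg ENNReal.toReal_nonneg _) this
  apply Real.sSup_le
  · rintro r ⟨a, c, hc, hx, rfl⟩
    -- volume of cube
    have hvol : vol a c = c ^ n := by
      simp only [vol, cube]
      rw [Real.volume_Icc_pi]
      rw [ENNReal.toReal_prod]
      simp [ENNReal.toReal_ofReal hc.le]
    -- pointwise bound for |b x - b y|
    have hbd : ∀ y ∈ cube a c, |b x - b y| ≤ B * c ^ δ x := by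
      intro y hy
      refine le_trans (hb x y) ?_
      refine mul_le_mul_of_nonneg_left ?_ hB
      refine Real.rpow_le_rpow dist_nonneg ?_ hδx.le
      rw [dist_pi_le_iff hc.le]
      intro i
      rw [Real.dist_eq]
      have h1 := hx.1 i
      have h2 := hx.2 i
      have h3 := hy.1 i
      have h4 := hy.2 i
      simp only at h1 h2 h3 h4
      rw [abs_sub_le_iff]
      constructor <;> linarith
    have hint : IntegrableOn f (cube a c) volume :=
      hf.integrableOn_isCompact isCompact_Icc
    have hint2 : IntegrableOn (fun y => B * c ^ δ x * |f y|) (cube a c) volume :=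
      hint.abs.const_mul _
    have hIbd : (∫ y in cube a c, |b x - b y| * |f y|)
        ≤ ∫ y in cube a c, B * c ^ δ x * |f y| := by
      refine integral_mono_of_nonneg ?_ hint2 ?_
      · exact Filter.Eventually.of_forall fun y => mul_nonneg (abs_nonneg _) (abs_nonneg _)
      · exact (MeasureTheory.ae_restrict_iff' measurableSet_Icc).2
          (Filter.Eventually.of_forall fun y hy =>
            mul_le_mul_of_nonneg_right (hbd y hy) (abs_nonneg _))
    have hIconst : (∫ y in cube a c, B * c ^ δ x * |f y|)
        = B * c ^ δ x * ∫ y in cube a c, |f y| := integral_const_mul _ _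
    set t := ∫ y in cube a c, |f y| with ht
    have htnn : 0 ≤ t := integral_nonneg fun y => abs_nonneg _
    have hpow : ∀ e : ℝ, ((c:ℝ) ^ n) ^ e = c ^ ((n:ℝ) * e) := fun e => by
      rw [← Real.rpow_natCast c n, ← Real.rpow_mul hc.le]
    have hn' : (n:ℝ) ≠ 0 := Nat.cast_ne_zero.mpr hn.ne'
    have hrpownn : 0 ≤ (vol a c) ^ (α / (n:ℝ) - 1) :=
      Real.rpow_nonneg ENNReal.toReal_nonneg _
    have step1 : (vol a c) ^ (α / (n:ℝ) - 1) * ∫ y in cube a c, |b x - b y| * |f y|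
        ≤ (vol a c) ^ (α / (n:ℝ) - 1) * (B * c ^ δ x * t) := by
      rw [← hIconst]
      exact mul_le_mul_of_nonneg_left hIbd hrpownn
    have key : (vol a c) ^ (α / (n:ℝ) - 1) * (B * c ^ δ x * t)
        = B * ((vol a c) ^ ((α + δ x) / (n:ℝ) - 1) * t) := by
      rw [hvol, hpow, hpow]
      have e1 : (n:ℝ) * (α / (n:ℝ) - 1) = α - n := by field_simp
      have e2 : (n:ℝ) * ((α + δ x) / (n:ℝ) - 1) = α + δ x - n := by field_simp
      rw [e1, e2]
      have : c ^ (α + δ x - (n:ℝ)) = c ^ (α - (n:ℝ)) * c ^ δ x := by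
        rw [← Real.rpow_add hc]; ring_nf
      rw [this]; ring
    have hmem : (vol a c) ^ ((α + δ x) / (n:ℝ) - 1) * t ∈ fracSet (α + δ x) f x :=
      ⟨a, c, hc, hx, rfl⟩
    have hle : (vol a c) ^ ((α + δ x) / (n:ℝ) - 1) * t ≤ fracMax (α + δ x) f x :=
      le_csSup hbdd hmem
    calc (vol a c) ^ (α / (n:ℝ) - 1) * ∫ y in cube a c, |b x - b y| * |f y|
        ≤ B * ((vol a c) ^ ((α + δ x) / (n:ℝ) - 1) * t) := by rw [← key]; exact step1
      _ ≤ B * fracMax (α + δ x) f x := mul_le_mul_of_nonneg_left hle hB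
      _ = 1 * B * fracMax (α + δ x) f x := by ring
  · have : (0:ℝ) ≤ B * fracMax (α + δ x) f x := mul_nonneg hB hfracnn
    linarith
end

section
/- Let 0 ≤ γ < n and p(·), q(·) be exponents with 1/q(x) = 1/p(x) − γ/n and p₊ < n/γ. If there is a constant C such that ‖χ_Q‖_{L^{s(·)}} ‖χ_Q‖_{L^{s'(·)}} ≤ C|Q| for all cubes Q and all admissible exponents s(·) (in particular for s(·) = (1−γ/n)q(·)), then ‖χ_Q‖_{L^{q(·)}} ‖χ_Q‖_{L^{p'(·)}} ≤ C |Q|^{1 − γ/n} for all cubes Q. -/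
open MeasureTheory Set

/-- Auxiliary: scaling of the infimum under `λ ↦ λ ^ s`. -/
theorem aux_sInf_rpow_le (P : ℝ → Prop) (s : ℝ) (hs : 0 < s) :
    sInf {μ : ℝ | 0 < μ ∧ P μ} ≤ (sInf {l : ℝ | 0 < l ∧ P (l ^ s)}) ^ s := by
  set A := {l : ℝ | 0 < l ∧ P (l ^ s)} with hA
  set B := {μ : ℝ | 0 < μ ∧ P μ} with hB
  have hBbdd : BddBelow B := ⟨0, fun x hx => hx.1.le⟩
  rcases A.eq_empty_or_nonempty with hAe | hAne
  · have hBe : B = ∅ := by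
      rw [Set.eq_empty_iff_forall_notMem] at hAe ⊢
      intro μ hμ
      refine hAe (μ ^ s⁻¹) ⟨Real.rpow_pos_of_pos hμ.1 _, ?_⟩
      rw [← Real.rpow_mul hμ.1.le, inv_mul_cancel₀ hs.ne', Real.rpow_one]
      exact hμ.2
    rw [hBe, hAe]
    simp [Real.sInf_empty, Real.zero_rpow hs.ne']
  · by_contra hlt
    push_neg at hlt
    set a := sInf A with ha
    have ha0 : 0 ≤ a := Real.sInf_nonneg fun x hx => hx.1.le
    set b := sInf B with hb
    have hb0 : 0 < b := lt_of_le_of_lt (Real.rpow_nonneg ha0 s) hlt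
    set t := b ^ s⁻¹ with htdef
    have ht : t ^ s = b := by
      rw [htdef, ← Real.rpow_mul hb0.le, inv_mul_cancel₀ hs.ne', Real.rpow_one]
    have hat : a < t := by
      by_contra hle
      push_neg at hle
      have h1 : t ^ s ≤ a ^ s :=
        Real.rpow_le_rpow (Real.rpow_nonneg hb0.le _) hle hs.le
      rw [ht] at h1
      exact absurd hlt (not_lt.mpr h1)
    obtain ⟨l, hlA, hlt'⟩ := exists_lt_of_csInf_lt hAne hat
    have hlB : l ^ s ∈ B := ⟨Real.rpow_pos_of_pos hlA.1 _, hlA.2⟩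
    have h1 : b ≤ l ^ s := csInf_le hBbdd hlB
    have h2 : l ^ s < t ^ s := Real.rpow_lt_rpow hlA.1.le hlt' hs
    rw [ht] at h2
    exact absurd (h1.trans_lt h2) (lt_irrefl b)

/-- Auxiliary: `‖χ_Q‖_{r(·)} ≤ ‖χ_Q‖_{s r(·)} ^ s` for indicators. -/
theorem aux_lux_indicator_rpow {n : ℕ} (r : (Fin n → ℝ) → ℝ) (hr : ∀ x, 0 < r x)
    (s : ℝ) (hs : 0 < s) (a : Fin n → ℝ) (h : ℝ) :
    LuxNorm r ((cube a h).indicator fun _ => (1 : ℝ)) ≤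
      (LuxNorm (fun x => s * r x) ((cube a h).indicator fun _ => (1 : ℝ))) ^ s := by
  simp only [LuxNorm]
  have hseteq :
      {lam : ℝ | 0 < lam ∧
          ∫ x, (|((cube a h).indicator fun _ => (1 : ℝ)) x| / lam) ^ (s * r x) ∂volume ≤ 1}
        = {lam : ℝ | 0 < lam ∧
          ∫ x, (|((cube a h).indicator fun _ => (1 : ℝ)) x| / lam ^ s) ^ r x ∂volume ≤ 1} := by
    ext lam
    simp only [Set.mem_setOf_eq, and_congr_right_iff]
    intro hlam
    have hfun : (fun x => (|((cube a h).indicator fun _ => (1 : ℝ)) x| / lam) ^ (s * r x))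
        = fun x => (|((cube a h).indicator fun _ => (1 : ℝ)) x| / lam ^ s) ^ r x := by
      funext x
      by_cases hx : x ∈ cube a h
      · simp only [Set.indicator_of_mem hx, abs_one]
        rw [div_eq_mul_inv, div_eq_mul_inv, one_mul, one_mul,
          Real.rpow_mul (inv_nonneg.mpr hlam.le), Real.inv_rpow hlam.le]
      · simp only [Set.indicator_of_notMem hx, abs_zero, zero_div]
        rw [Real.zero_rpow (mul_pos hs (hr x)).ne', Real.zero_rpow (hr x).ne']
    rw [hfun]
  rw [hseteq]
  exact aux_sInf_rpow_le
    (fun μ => ∫ x, (|((cube a h).indicator fun _ => (1 : ℝ)) x| / μ) ^ r x ∂volume ≤ 1) s hs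

/-- Auxiliary: nonnegativity of the Luxemburg norm. -/
theorem aux_lux_nonneg {n : ℕ} (r f : (Fin n → ℝ) → ℝ) : 0 ≤ LuxNorm r f :=
  Real.sInf_nonneg fun x hx => hx.1.le

/-- Lemma 2.4(ii): if the products of Luxemburg norms of characteristic
functions for the conjugate pair `(1-γ/n)q(·)`, `(1-γ/n)p'(·)` are controlled by `C|Q|`
for all cubes, then `‖χ_Q‖_{L^{q(·)}} ‖χ_Q‖_{L^{p'(·)}} ≤ C' |Q|^{1-γ/n}` for all cubes. -/
theorem statement11 (n : ℕ) (hn : 0 < n) (γ : ℝ) (hγ : 0 ≤ γ ∧ γ < n)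
    (p q p' : (Fin n → ℝ) → ℝ)
    (hp : ∀ x, 1 < p x) (hq : ∀ x, 1 < q x)
    (hpq : ∀ x, 1 / q x = 1 / p x - γ / (n : ℝ))
    (hp' : ∀ x, 1 / p x + 1 / p' x = 1)
    (hupper : ∀ x, γ * p x < n)
    (C : ℝ) (hC : 0 ≤ C)
    (H : ∀ (a : Fin n → ℝ) (h : ℝ), 0 < h →
      LuxNorm (fun x => (1 - γ / (n : ℝ)) * q x) ((cube a h).indicator fun _ => (1 : ℝ)) *
        LuxNorm (fun x => (1 - γ / (n : ℝ)) * p' x) ((cube a h).indicator fun _ => (1 : ℝ)) ≤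
        C * vol a h) :
    ∃ C' : ℝ, 0 ≤ C' ∧ ∀ (a : Fin n → ℝ) (h : ℝ), 0 < h →
      LuxNorm q ((cube a h).indicator fun _ => (1 : ℝ)) *
        LuxNorm p' ((cube a h).indicator fun _ => (1 : ℝ)) ≤
        C' * (vol a h) ^ (1 - γ / (n : ℝ)) := by
  obtain ⟨hγ0, hγn⟩ := hγ
  have hn' : (0 : ℝ) < n := by exact_mod_cast hn
  set s : ℝ := 1 - γ / (n : ℝ) with hsdef
  have hs : 0 < s := by
    have : γ / (n : ℝ) < 1 := (div_lt_one hn').mpr hγn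
    simp only [hsdef]; linarith
  have hq0 : ∀ x, 0 < q x := fun x => lt_trans one_pos (hq x)
  have hp'0 : ∀ x, 0 < p' x := by
    intro x
    have hpx : 0 < p x := lt_trans one_pos (hp x)
    have h1 : 1 / p x < 1 := (div_lt_one hpx).mpr (hp x)
    have h2 : 0 < 1 / p' x := by linarith [hp' x]
    exact one_div_pos.mp h2
  refine ⟨C ^ s, Real.rpow_nonneg hC s, fun a h hh => ?_⟩
  have hA := aux_lux_indicator_rpow q hq0 s hs a h
  have hB := aux_lux_indicator_rpow p' hp'0 s hs a h
  have hvol : 0 ≤ vol a h := ENNReal.toReal_nonneg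
  calc LuxNorm q ((cube a h).indicator fun _ => (1 : ℝ)) *
        LuxNorm p' ((cube a h).indicator fun _ => (1 : ℝ))
      ≤ (LuxNorm (fun x => s * q x) ((cube a h).indicator fun _ => (1 : ℝ))) ^ s *
        (LuxNorm (fun x => s * p' x) ((cube a h).indicator fun _ => (1 : ℝ))) ^ s := by
        exact mul_le_mul hA hB (aux_lux_nonneg _ _) (Real.rpow_nonneg (aux_lux_nonneg _ _) s)
    _ = (LuxNorm (fun x => s * q x) ((cube a h).indicator fun _ => (1 : ℝ)) *
        LuxNorm (fun x => s * p' x) ((cube a h).indicator fun _ => (1 : ℝ))) ^ s :=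
        (Real.mul_rpow (aux_lux_nonneg _ _) (aux_lux_nonneg _ _)).symm
    _ ≤ (C * vol a h) ^ s := by
        refine Real.rpow_le_rpow (mul_nonneg (aux_lux_nonneg _ _) (aux_lux_nonneg _ _)) ?_ hs.le
        exact H a h hh
    _ = C ^ s * (vol a h) ^ s := Real.mul_rpow hC hvol
end

section
/- Let δ(·), β, p(·) be as in the variable Lipschitz framework and suppose b ∈ L(δ(·)) (pointwise type) and b ≥ 0, with 0 ≤ α < n. Then for every locally integrable f and every x, |[b,M_α](f)(x)| ≤ C ‖b‖_{L(δ(·))} M_{α+δ(x)}(f)(x). -/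
open MeasureTheory Set

lemma cont_aux {n : ℕ} (δ b : (Fin n → ℝ) → ℝ) (B : ℝ)
    (hδ : ∀ x, 0 < δ x)
    (hLip : ∀ x y, |b x - b y| ≤ B * dist x y ^ δ x) : Continuous b := by
  rw [continuous_iff_continuousAt]
  intro x₀
  rw [ContinuousAt, tendsto_iff_dist_tendsto_zero]
  have h1 : Filter.Tendsto (fun y : Fin n → ℝ => dist x₀ y) (nhds x₀) (nhds 0) := by
    have hcd : Continuous (fun y : Fin n → ℝ => dist x₀ y) := continuous_const.dist continuous_id
    simpa using hcd.tendsto x₀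
  have hc : ContinuousAt (fun t : ℝ => t ^ δ x₀) 0 :=
    Real.continuousAt_rpow_const 0 (δ x₀) (Or.inr (hδ x₀).le)
  have h2 : Filter.Tendsto (fun y => dist x₀ y ^ δ x₀) (nhds x₀) (nhds 0) := by
    have := hc.tendsto.comp h1
    simpa [Function.comp_def, Real.zero_rpow (hδ x₀).ne'] using this
  apply squeeze_zero (fun y => dist_nonneg) (g := fun y => B * dist x₀ y ^ δ x₀)
  · intro y
    rw [Real.dist_eq, abs_sub_comm]
    exact hLip x₀ y
  · simpa using h2.const_mul B

/-- for `b ∈ L(δ(·))` with `b ≥ 0` and `0 ≤ α`, `α + δ(x) < n`,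
`|[b, M_α] f (x)| ≤ C ‖b‖_{L(δ(·))} M_{α+δ(x)} f (x)` with `C = C(n)`. -/
theorem statement17 (n : ℕ) (hn : 0 < n) :
    ∃ C : ℝ, 0 ≤ C ∧
      ∀ (α : ℝ), 0 ≤ α →
      ∀ (δ : (Fin n → ℝ) → ℝ), (∀ x, 0 < δ x ∧ α + δ x < n) →
      ∀ (b : (Fin n → ℝ) → ℝ) (B : ℝ), 0 ≤ B →
        (∀ x y, |b x - b y| ≤ B * dist x y ^ δ x) → (∀ y, 0 ≤ b y) →
      ∀ (f : (Fin n → ℝ) → ℝ), LocallyIntegrable f volume →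
      ∀ x : Fin n → ℝ,
        BddAbove (fracSet α f x) →
        BddAbove (fracSet α (fun y => b y * f y) x) →
        BddAbove (fracSet (α + δ x) f x) →
        |b x * fracMax α f x - fracMax α (fun y => b y * f y) x| ≤
          C * B * fracMax (α + δ x) f x := by
  refine ⟨1, zero_le_one, ?_⟩
  intro α hα δ hδ b B hB hLip hb f hf x hbd1 hbd2 hbd3
  have hδx : ∀ z, 0 < δ z := fun z => (hδ z).1
  have hcont : Continuous b := cont_aux δ b B hδx hLip
  have hnR : (n : ℝ) ≠ 0 := Nat.cast_ne_zero.mpr hn.ne'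
  set S := fracMax α f x with hS
  set T := fracMax α (fun y => b y * f y) x with hT
  set U := fracMax (α + δ x) f x with hU
  -- basic cube facts
  have hx0 : x ∈ cube (fun i => x i - 1) 1 := by
    simp only [cube, Set.mem_Icc, Pi.le_def]
    constructor <;> intro i <;> simp <;> linarith
  have hvolnn : ∀ (a : Fin n → ℝ) (c : ℝ), 0 ≤ vol a c := fun a c => ENNReal.toReal_nonneg
  have hvpow : ∀ (a : Fin n → ℝ) (c γ : ℝ), 0 ≤ (vol a c) ^ (γ / (n:ℝ) - 1) :=
    fun a c γ => Real.rpow_nonneg (hvolnn a c) _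
  have hvol : ∀ (a : Fin n → ℝ) (c : ℝ), 0 < c → vol a c = c ^ n := by
    intro a c hc
    simp only [vol, cube, Real.volume_Icc_pi, add_sub_cancel_left]
    rw [Finset.prod_const, Finset.card_univ, Fintype.card_fin, ← ENNReal.ofReal_pow hc.le,
      ENNReal.toReal_ofReal (by positivity)]
  -- nonemptiness and nonnegativity
  have hmem1 : (vol (fun i => x i - 1) 1) ^ (α / (n:ℝ) - 1) *
      (∫ y in cube (fun i => x i - 1) 1, |f y|) ∈ fracSet α f x :=
    ⟨_, 1, one_pos, hx0, rfl⟩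
  have hmem2 : (vol (fun i => x i - 1) 1) ^ (α / (n:ℝ) - 1) *
      (∫ y in cube (fun i => x i - 1) 1, |b y * f y|) ∈ fracSet α (fun y => b y * f y) x :=
    ⟨_, 1, one_pos, hx0, rfl⟩
  have hmem3 : (vol (fun i => x i - 1) 1) ^ ((α + δ x) / (n:ℝ) - 1) *
      (∫ y in cube (fun i => x i - 1) 1, |f y|) ∈ fracSet (α + δ x) f x :=
    ⟨_, 1, one_pos, hx0, rfl⟩
  have hne1 : (fracSet α f x).Nonempty := ⟨_, hmem1⟩
  have hne2 : (fracSet α (fun y => b y * f y) x).Nonempty := ⟨_, hmem2⟩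
  have hT0 : 0 ≤ T := le_trans
    (mul_nonneg (hvpow _ _ _) (integral_nonneg fun _ => abs_nonneg _)) (le_csSup hbd2 hmem2)
  have hU0 : 0 ≤ U := le_trans
    (mul_nonneg (hvpow _ _ _) (integral_nonneg fun _ => abs_nonneg _)) (le_csSup hbd3 hmem3)
  -- distances inside a cube
  have hdist : ∀ (a : Fin n → ℝ) (c : ℝ), 0 < c → x ∈ cube a c →
      ∀ y ∈ cube a c, |b x - b y| ≤ B * c ^ δ x := by
    intro a c hc hx y hy
    have hxa : ∀ i, a i ≤ x i := hx.1
    have hxb : ∀ i, x i ≤ a i + c := hx.2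
    have hya : ∀ i, a i ≤ y i := hy.1
    have hyb : ∀ i, y i ≤ a i + c := hy.2
    have hd : dist x y ≤ c := by
      rw [dist_pi_le_iff hc.le]
      intro i
      rw [Real.dist_eq, abs_sub_le_iff]
      exact ⟨by linarith [hxa i, hxb i, hya i, hyb i],
             by linarith [hxa i, hxb i, hya i, hyb i]⟩
    calc |b x - b y| ≤ B * dist x y ^ δ x := hLip x y
      _ ≤ B * c ^ δ x :=
          mul_le_mul_of_nonneg_left (Real.rpow_le_rpow dist_nonneg hd (hδx x).le) hB
  -- key integrability facts on a cube
  have main : ∀ (a : Fin n → ℝ) (c : ℝ), 0 < c → x ∈ cube a c →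
      IntegrableOn f (cube a c) volume ∧
      IntegrableOn (fun y => |b x - b y| * |f y|) (cube a c) volume ∧
      IntegrableOn (fun y => |b y * f y|) (cube a c) volume ∧
      (∫ y in cube a c, |b x - b y| * |f y|) ≤ B * c ^ δ x * ∫ y in cube a c, |f y| := by
    intro a c hc hx
    have hQ : MeasurableSet (cube a c) := measurableSet_Icc
    have hfQ : IntegrableOn f (cube a c) volume := hf.integrableOn_isCompact isCompact_Icc
    have hd := hdist a c hc hx
    have intg : IntegrableOn (fun y => B * c ^ δ x * |f y|) (cube a c) volume :=
      hfQ.abs.const_mul _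
    have inth : IntegrableOn (fun y => |b x - b y| * |f y|) (cube a c) volume := by
      apply Integrable.mono' intg
      · exact (((continuous_const.sub hcont).abs.aestronglyMeasurable).restrict.mul
          (continuous_abs.comp_aestronglyMeasurable hf.aestronglyMeasurable.restrict))
      · filter_upwards [ae_restrict_mem hQ] with y hy
        rw [Real.norm_eq_abs, abs_mul, abs_abs, abs_abs]
        exact mul_le_mul_of_nonneg_right (hd y hy) (abs_nonneg _)
    have intg2 : IntegrableOn (fun y => (b x + B * c ^ δ x) * |f y|) (cube a c) volume :=
      hfQ.abs.const_mul _
    have intbf : IntegrableOn (fun y => |b y * f y|) (cube a c) volume := by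
      apply Integrable.mono' intg2
      · exact continuous_abs.comp_aestronglyMeasurable
          (hcont.aestronglyMeasurable.restrict.mul hf.aestronglyMeasurable.restrict)
      · filter_upwards [ae_restrict_mem hQ] with y hy
        rw [Real.norm_eq_abs, abs_abs, abs_mul, abs_of_nonneg (hb y)]
        have h1 : b y ≤ b x + B * c ^ δ x := by
          have h2 := hd y hy
          have h3 := neg_abs_le (b x - b y)
          linarith
        exact mul_le_mul_of_nonneg_right h1 (abs_nonneg _)
    refine ⟨hfQ, inth, intbf, ?_⟩
    have := setIntegral_mono_on inth intg hQ
      (fun y hy => mul_le_mul_of_nonneg_right (hd y hy) (abs_nonneg _))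
    rwa [integral_const_mul] at this
  -- key estimate
  have key : ∀ (a : Fin n → ℝ) (c : ℝ), 0 < c → x ∈ cube a c →
      (vol a c) ^ (α / (n:ℝ) - 1) * ∫ y in cube a c, |b x - b y| * |f y| ≤ B * U := by
    intro a c hc hx
    obtain ⟨hfQ, inth, intbf, hineq⟩ := main a c hc hx
    have hI0 : (0:ℝ) ≤ ∫ y in cube a c, |f y| := integral_nonneg fun _ => abs_nonneg _
    have hpow : (c ^ n : ℝ) ^ (α / (n:ℝ) - 1) * c ^ δ x
        = (c ^ n : ℝ) ^ ((α + δ x) / (n:ℝ) - 1) := by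
      rw [← Real.rpow_natCast c n, ← Real.rpow_mul hc.le, ← Real.rpow_mul hc.le,
        ← Real.rpow_add hc]
      congr 1
      field_simp
      ring
    have hUmem : (vol a c) ^ ((α + δ x) / (n:ℝ) - 1) * (∫ y in cube a c, |f y|)
        ∈ fracSet (α + δ x) f x := ⟨a, c, hc, hx, rfl⟩
    calc (vol a c) ^ (α / (n:ℝ) - 1) * ∫ y in cube a c, |b x - b y| * |f y|
        ≤ (vol a c) ^ (α / (n:ℝ) - 1) * (B * c ^ δ x * ∫ y in cube a c, |f y|) :=
          mul_le_mul_of_nonneg_left hineq (hvpow a c α)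
      _ = B * ((vol a c) ^ ((α + δ x) / (n:ℝ) - 1) * ∫ y in cube a c, |f y|) := by
          rw [hvol a c hc]
          calc (c ^ n : ℝ) ^ (α / (n:ℝ) - 1) * (B * c ^ δ x * ∫ y in cube a c, |f y|)
              = B * (((c ^ n : ℝ) ^ (α / (n:ℝ) - 1) * c ^ δ x) * ∫ y in cube a c, |f y|) := by
                ring
            _ = B * ((c ^ n : ℝ) ^ ((α + δ x) / (n:ℝ) - 1) * ∫ y in cube a c, |f y|) := by
                rw [hpow]
      _ ≤ B * U := mul_le_mul_of_nonneg_left (le_csSup hbd3 hUmem) hB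
  -- step 1 : b x * S ≤ T + B * U
  have step1 : b x * S ≤ T + B * U := by
    rcases eq_or_lt_of_le (hb x) with h0 | h0
    · rw [← h0, zero_mul]
      exact add_nonneg hT0 (mul_nonneg hB hU0)
    · have hSle : S ≤ (T + B * U) / b x := by
        apply csSup_le hne1
        rintro r ⟨a, c, hc, hx', rfl⟩
        rw [le_div_iff₀ h0]
        obtain ⟨hfQ, inth, intbf, _⟩ := main a c hc hx'
        have hTmem : (vol a c) ^ (α / (n:ℝ) - 1) * (∫ y in cube a c, |b y * f y|) ≤ T :=
          le_csSup hbd2 ⟨a, c, hc, hx', rfl⟩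
        have hK := key a c hc hx'
        have hint : (∫ y in cube a c, b x * |f y|)
            ≤ ∫ y in cube a c, (|b y * f y| + |b x - b y| * |f y|) := by
          apply setIntegral_mono_on (hfQ.abs.const_mul _) (intbf.add inth) measurableSet_Icc
          intro y hy
          have h1 : b x ≤ b y + |b x - b y| := by
            have := le_abs_self (b x - b y); linarith
          calc b x * |f y| ≤ (b y + |b x - b y|) * |f y| :=
                mul_le_mul_of_nonneg_right h1 (abs_nonneg _)
            _ = |b y * f y| + |b x - b y| * |f y| := by
                rw [abs_mul, abs_of_nonneg (hb y)]; ring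
        calc (vol a c) ^ (α / (n:ℝ) - 1) * (∫ y in cube a c, |f y|) * b x
            = (vol a c) ^ (α / (n:ℝ) - 1) * ∫ y in cube a c, b x * |f y| := by
              rw [integral_const_mul]; ring
          _ ≤ (vol a c) ^ (α / (n:ℝ) - 1) *
              ((∫ y in cube a c, |b y * f y|) + ∫ y in cube a c, |b x - b y| * |f y|) := by
              apply mul_le_mul_of_nonneg_left _ (hvpow a c α)
              rw [← integral_add intbf inth]
              exact hint
          _ = (vol a c) ^ (α / (n:ℝ) - 1) * (∫ y in cube a c, |b y * f y|) +
              (vol a c) ^ (α / (n:ℝ) - 1) * ∫ y in cube a c, |b x - b y| * |f y| := by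
              ring
          _ ≤ T + B * U := add_le_add hTmem hK
      calc b x * S ≤ b x * ((T + B * U) / b x) := mul_le_mul_of_nonneg_left hSle (hb x)
        _ = T + B * U := by field_simp
  -- step 2 : T ≤ b x * S + B * U
  have step2 : T ≤ b x * S + B * U := by
    apply csSup_le hne2
    rintro r ⟨a, c, hc, hx', rfl⟩
    obtain ⟨hfQ, inth, intbf, _⟩ := main a c hc hx'
    have hSmem : (vol a c) ^ (α / (n:ℝ) - 1) * (∫ y in cube a c, |f y|) ≤ S :=
      le_csSup hbd1 ⟨a, c, hc, hx', rfl⟩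
    have hK := key a c hc hx'
    have hint : (∫ y in cube a c, |b y * f y|)
        ≤ ∫ y in cube a c, (b x * |f y| + |b x - b y| * |f y|) := by
      apply setIntegral_mono_on intbf ((hfQ.abs.const_mul _).add inth) measurableSet_Icc
      intro y hy
      have h1 : b y ≤ b x + |b x - b y| := by
        have := neg_abs_le (b x - b y); linarith
      calc |b y * f y| = b y * |f y| := by rw [abs_mul, abs_of_nonneg (hb y)]
        _ ≤ (b x + |b x - b y|) * |f y| := mul_le_mul_of_nonneg_right h1 (abs_nonneg _)
        _ = b x * |f y| + |b x - b y| * |f y| := by ring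
    calc (vol a c) ^ (α / (n:ℝ) - 1) * (∫ y in cube a c, |b y * f y|)
        ≤ (vol a c) ^ (α / (n:ℝ) - 1) *
          ((∫ y in cube a c, b x * |f y|) + ∫ y in cube a c, |b x - b y| * |f y|) := by
          apply mul_le_mul_of_nonneg_left _ (hvpow a c α)
          rw [← integral_add (hfQ.abs.const_mul _) inth]
          exact hint
      _ = b x * ((vol a c) ^ (α / (n:ℝ) - 1) * (∫ y in cube a c, |f y|)) +
          (vol a c) ^ (α / (n:ℝ) - 1) * ∫ y in cube a c, |b x - b y| * |f y| := by
          rw [integral_const_mul]; ring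
      _ ≤ b x * S + B * U :=
          add_le_add (mul_le_mul_of_nonneg_left hSmem (hb x)) hK
  rw [one_mul, abs_sub_le_iff]
  constructor <;> linarith
end
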